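/- (Donsker–Varadhan / contrastive representation) For a probability mass function μ on a finite type Ω and a fixed reference PMF ρ with full support, we have sup over functions f : Ω → ℝ of [E_{x~μ} f(x) − log E_{x~ρ} exp(f(x))] = D_KL(μ ‖ ρ), and the supremum is attained by f(x) = log(μ(x)/ρ(x)) on the support of μ. -/

import Mathlib

/-- Donsker–Varadhan: For PMFs `μ, ρ` on a finite nonempty type
with `ρ` of full support,
`⨆ f, (E_μ f − log E_ρ exp f) = D_KL(μ ‖ ρ)`, and the supremum is attained by
`f x = log (μ x / ρ x)` on the support of `μ` (i.e., with the log-partition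
computed over the support of `μ`). -/
theorem donsker_varadhan
    {Ω : Type*} [Fintype Ω] [Nonempty Ω]
    (μ ρ : Ω → ℝ)
    (hμ : ∀ x, 0 ≤ μ x) (hμsum : ∑ x, μ x = 1)
    (hρ : ∀ x, 0 < ρ x) (hρsum : ∑ x, ρ x = 1) :
    (⨆ f : Ω → ℝ,
        ((∑ x, μ x * f x) - Real.log (∑ x, ρ x * Real.exp (f x))))
      = ∑ x, μ x * Real.log (μ x / ρ x) ∧
    ((∑ x, μ x * Real.log (μ x / ρ x)) -
        Real.log (∑ x ∈ Finset.univ.filter (fun x => 0 < μ x),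
          ρ x * Real.exp (Real.log (μ x / ρ x))))
      = ∑ x, μ x * Real.log (μ x / ρ x) := by
  classical
  set S := Finset.univ.filter (fun x => 0 < μ x) with hS
  set K := ∑ x, μ x * Real.log (μ x / ρ x) with hK
  have hμ0 : ∀ x, x ∉ S → μ x = 0 := by
    intro x hx
    simp only [hS, Finset.mem_filter, Finset.mem_univ, true_and, not_lt] at hx
    exact le_antisymm hx (hμ x)
  have hKS : K = ∑ x ∈ S, μ x * Real.log (μ x / ρ x) := by
    rw [hK]
    exact (Finset.sum_subset (Finset.subset_univ S)
      (fun x _ hx => by rw [hμ0 x hx]; ring)).symm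
  have hμS : ∑ x ∈ S, μ x = 1 := by
    rw [← hμsum]
    exact Finset.sum_subset (Finset.subset_univ S) (fun x _ hx => hμ0 x hx)
  -- the attained value: partition function over the support is 1
  have hatt : ∑ x ∈ S, ρ x * Real.exp (Real.log (μ x / ρ x)) = 1 := by
    rw [← hμS]
    apply Finset.sum_congr rfl
    intro x hx
    have hμx : 0 < μ x := (Finset.mem_filter.mp hx).2
    rw [Real.exp_log (div_pos hμx (hρ x)), mul_comm,
      div_mul_cancel₀ (μ x) (hρ x).ne']
  -- upper bound
  have hub : ∀ f : Ω → ℝ,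
      (∑ x, μ x * f x) - Real.log (∑ x, ρ x * Real.exp (f x)) ≤ K := by
    intro f
    set Z := ∑ x, ρ x * Real.exp (f x) with hZ
    have hZpos : 0 < Z :=
      Finset.sum_pos (fun x _ => mul_pos (hρ x) (Real.exp_pos _)) Finset.univ_nonempty
    have hterm : ∀ x ∈ S, μ x * f x - μ x * Real.log (μ x / ρ x)
        ≤ μ x * Real.log Z + (ρ x * Real.exp (f x)) / Z - μ x := by
      intro x hx
      have hμx : 0 < μ x := (Finset.mem_filter.mp hx).2
      set a := ρ x * Real.exp (f x) / μ x with ha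
      have hapos : 0 < a := div_pos (mul_pos (hρ x) (Real.exp_pos _)) hμx
      have h1 : Real.log (a / Z) ≤ a / Z - 1 :=
        Real.log_le_sub_one_of_pos (div_pos hapos hZpos)
      have h2 : Real.log (a / Z) = Real.log a - Real.log Z :=
        Real.log_div hapos.ne' hZpos.ne'
      have h3 : Real.log a ≤ a / Z - 1 + Real.log Z := by linarith
      have h4 : Real.log a = Real.log (ρ x) + f x - Real.log (μ x) := by
        rw [ha, Real.log_div (mul_pos (hρ x) (Real.exp_pos _)).ne' hμx.ne',
          Real.log_mul (hρ x).ne' (Real.exp_pos _).ne', Real.log_exp]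
      have h5 : Real.log (μ x / ρ x) = Real.log (μ x) - Real.log (ρ x) :=
        Real.log_div hμx.ne' (hρ x).ne'
      have h6 := mul_le_mul_of_nonneg_left h3 hμx.le
      calc μ x * f x - μ x * Real.log (μ x / ρ x)
          = μ x * Real.log a := by rw [h4, h5]; ring
        _ ≤ μ x * (a / Z - 1 + Real.log Z) := h6
        _ = μ x * Real.log Z + (ρ x * Real.exp (f x)) / Z - μ x := by
            rw [ha]; field_simp; ring
    have hsum := Finset.sum_le_sum hterm
    rw [Finset.sum_sub_distrib] at hsum
    have hrw : ∑ x ∈ S, (μ x * Real.log Z + ρ x * Real.exp (f x) / Z - μ x)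
        = (∑ x ∈ S, μ x) * Real.log Z + (∑ x ∈ S, ρ x * Real.exp (f x)) / Z
            - ∑ x ∈ S, μ x := by
      rw [Finset.sum_sub_distrib, Finset.sum_add_distrib, Finset.sum_mul,
        Finset.sum_div]
    rw [hrw, hμS] at hsum
    have hμf : ∑ x, μ x * f x = ∑ x ∈ S, μ x * f x :=
      (Finset.sum_subset (Finset.subset_univ S)
        (fun x _ hx => by rw [hμ0 x hx]; ring)).symm
    have hZS : ∑ x ∈ S, ρ x * Real.exp (f x) ≤ Z := by
      rw [hZ]
      exact Finset.sum_le_sum_of_subset_of_nonneg (Finset.subset_univ S)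
        (fun x _ _ => (mul_pos (hρ x) (Real.exp_pos _)).le)
    have hdiv : (∑ x ∈ S, ρ x * Real.exp (f x)) / Z ≤ 1 := by
      rw [div_le_one hZpos]; exact hZS
    rw [hμf, hKS]
    linarith
  -- the supremum
  have hbdd : BddAbove (Set.range fun f : Ω → ℝ =>
      (∑ x, μ x * f x) - Real.log (∑ x, ρ x * Real.exp (f x))) := by
    refine ⟨K, ?_⟩
    rintro _ ⟨f, rfl⟩
    exact hub f
  constructor
  · apply le_antisymm (ciSup_le hub)
    -- approximating sequence
    set c := ∑ x ∈ Finset.univ.filter (fun x => ¬ 0 < μ x), ρ x with hc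
    have hc0 : 0 ≤ c := Finset.sum_nonneg fun x _ => (hρ x).le
    set g : ℕ → Ω → ℝ := fun n x =>
      if 0 < μ x then Real.log (μ x / ρ x) else -(n : ℝ) with hg
    have hΦg : ∀ n : ℕ,
        (∑ x, μ x * g n x) - Real.log (∑ x, ρ x * Real.exp (g n x))
          = K - Real.log (1 + c * Real.exp (-(n : ℝ))) := by
      intro n
      have e1 : ∑ x, μ x * g n x = K := by
        rw [hKS]
        refine (Finset.sum_subset (Finset.subset_univ S)
          (fun x _ hx => by rw [hμ0 x hx]; ring)).symm.trans ?_
        apply Finset.sum_congr rfl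
        intro x hx
        have hμx : 0 < μ x := (Finset.mem_filter.mp hx).2
        simp [hg, hμx]
      have e2 : ∑ x, ρ x * Real.exp (g n x) = 1 + c * Real.exp (-(n : ℝ)) := by
        rw [← Finset.sum_filter_add_sum_filter_not Finset.univ (fun x => 0 < μ x)
          (fun x => ρ x * Real.exp (g n x))]
        have e3 : ∑ x ∈ Finset.univ.filter (fun x => 0 < μ x),
            ρ x * Real.exp (g n x) = 1 := by
          rw [← hatt]
          apply Finset.sum_congr rfl
          intro x hx
          have hμx : 0 < μ x := (Finset.mem_filter.mp hx).2
          simp [hg, hμx]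
        have e4 : ∑ x ∈ Finset.univ.filter (fun x => ¬ 0 < μ x),
            ρ x * Real.exp (g n x) = c * Real.exp (-(n : ℝ)) := by
          rw [hc, Finset.sum_mul]
          apply Finset.sum_congr rfl
          intro x hx
          have hμx : ¬ 0 < μ x := (Finset.mem_filter.mp hx).2
          simp [hg, hμx]
        rw [e3, e4]
      rw [e1, e2]
    have hlim : Filter.Tendsto
        (fun n : ℕ => K - Real.log (1 + c * Real.exp (-(n : ℝ))))
        Filter.atTop (nhds K) := by
      have h1 : Filter.Tendsto (fun n : ℕ => Real.exp (-(n : ℝ)))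
          Filter.atTop (nhds 0) :=
        Real.tendsto_exp_atBot.comp
          (Filter.tendsto_neg_atTop_atBot.comp tendsto_natCast_atTop_atTop)
      have h2 : Filter.Tendsto (fun n : ℕ => 1 + c * Real.exp (-(n : ℝ)))
          Filter.atTop (nhds 1) := by
        have := (h1.const_mul c).const_add 1
        simpa using this
      have h3 : Filter.Tendsto
          (fun n : ℕ => Real.log (1 + c * Real.exp (-(n : ℝ))))
          Filter.atTop (nhds 0) := by
        have := ((Real.continuousAt_log one_ne_zero).tendsto).comp h2
        simpa [Function.comp_def] using this
      have := h3.const_sub K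
      simpa using this
    refine le_of_tendsto hlim (Filter.Eventually.of_forall fun n => ?_)
    calc K - Real.log (1 + c * Real.exp (-(n : ℝ)))
        = (∑ x, μ x * g n x) - Real.log (∑ x, ρ x * Real.exp (g n x)) :=
          (hΦg n).symm
      _ ≤ _ := le_ciSup hbdd (g n)
  · rw [hatt, Real.log_one, sub_zero]
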